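/- Let (Ω, F, (F_k)_{k=0,…,n}, P) be a filtered probability space and let (M_k)_{k=0,…,n} be a real-valued martingale with |M_k| ≤ c almost surely for every k, where c ≥ 0. Write Δ_k := M_{k+1} − M_k. Then E[(Σ_{k=0}^{n−1} Δ_k²)²] ≤ 12c²·E[(M_n − M_0)²] ≤ 48c⁴. -/

import Mathlib

open MeasureTheory

private lemma sq_sum_aux (a : ℕ → ℝ) (n : ℕ) :
    (∑ k ∈ Finset.range n, a k)^2
      = ∑ k ∈ Finset.range n, ((a k)^2 + 2 * a k * ∑ l ∈ Finset.Ico (k+1) n, a l) := by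
  induction n with
  | zero => simp
  | succ n ih =>
    have h1 : ∀ k ∈ Finset.range n,
        (a k)^2 + 2 * a k * ∑ l ∈ Finset.Ico (k+1) (n+1), a l
          = ((a k)^2 + 2 * a k * ∑ l ∈ Finset.Ico (k+1) n, a l) + 2 * a k * a n := by
      intro k hk
      rw [Finset.sum_Ico_succ_top (Finset.mem_range.mp hk)]
      ring
    rw [Finset.sum_range_succ a, add_sq, ih, Finset.sum_range_succ, Finset.sum_congr rfl h1]
    simp only [Finset.sum_add_distrib, Finset.Ico_self, Finset.sum_empty]
    have h2 : ∑ k ∈ Finset.range n, 2 * a k * a n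
        = 2 * (∑ k ∈ Finset.range n, a k) * a n := by
      rw [← Finset.sum_mul, ← Finset.mul_sum]
    rw [h2]; ring

private lemma tele_aux (x : ℕ → ℝ) (m : ℕ) : ∀ n, m ≤ n →
    (x n - x m)^2 = ∑ l ∈ Finset.Ico m n,
      ((x (l+1) - x l)^2 + 2*(x l - x m)*(x (l+1) - x l)) := by
  intro n hn
  induction n, hn using Nat.le_induction with
  | base => simp
  | succ n hn ih => rw [Finset.sum_Ico_succ_top hn, ← ih]; ring

private lemma orth_aux {Ω : Type*} {m0 : MeasurableSpace Ω} (P : Measure Ω)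
    [IsProbabilityMeasure P] (ℱ : Filtration ℕ m0) (M : ℕ → Ω → ℝ)
    (hM : Martingale M ℱ P) (l : ℕ) (X : Ω → ℝ)
    (hX : StronglyMeasurable[ℱ l] X)
    (hprod : Integrable (fun ω => X ω * (M (l+1) ω - M l ω)) P) :
    ∫ ω, X ω * (M (l+1) ω - M l ω) ∂P = 0 := by
  have hm : ℱ l ≤ m0 := ℱ.le l
  have hg : Integrable (fun ω => M (l+1) ω - M l ω) P :=
    (hM.integrable _).sub (hM.integrable _)
  have hpull : P[(fun ω => X ω * (M (l+1) ω - M l ω)) | ℱ l]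
      =ᵐ[P] X * P[(fun ω => M (l+1) ω - M l ω) | ℱ l] :=
    condExp_mul_of_stronglyMeasurable_left hX hprod hg
  have hzero : P[(fun ω => M (l+1) ω - M l ω) | ℱ l] =ᵐ[P] 0 := by
    have h1 : P[(fun ω => M (l+1) ω - M l ω) | ℱ l]
        =ᵐ[P] P[M (l+1) | ℱ l] - P[M l | ℱ l] :=
      condExp_sub (hM.integrable (l+1)) (hM.integrable l) _
    have h2 := hM.condExp_ae_eq (Nat.le_succ l)
    have h3 := hM.condExp_ae_eq (le_refl l)
    filter_upwards [h1, h2, h3] with ω e1 e2 e3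
    simp only [Pi.sub_apply] at e1
    simp [e1, e2, e3]
  have hfin : P[(fun ω => X ω * (M (l+1) ω - M l ω)) | ℱ l] =ᵐ[P] 0 := by
    filter_upwards [hpull, hzero] with ω e1 e2
    simp [e1, Pi.mul_apply, e2]
  rw [← integral_condExp hm (f := fun ω => X ω * (M (l+1) ω - M l ω)),
    integral_congr_ae hfin]
  simp

theorem stmt11 {Ω : Type*} {m0 : MeasurableSpace Ω} (P : Measure Ω) [IsProbabilityMeasure P]
    (ℱ : Filtration ℕ m0) (M : ℕ → Ω → ℝ) (hM : Martingale M ℱ P)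
    (n : ℕ) (c : ℝ) (hc : 0 ≤ c)
    (hbdd : ∀ k ≤ n, ∀ᵐ ω ∂P, |M k ω| ≤ c) :
    (∫ ω, (∑ k ∈ Finset.range n, (M (k+1) ω - M k ω)^2)^2 ∂P
      ≤ 12 * c^2 * ∫ ω, (M n ω - M 0 ω)^2 ∂P) ∧
    12 * c^2 * ∫ ω, (M n ω - M 0 ω)^2 ∂P ≤ 48 * c^4 := by
  -- strong measurability
  have hSM : ∀ i, StronglyMeasurable (M i) := fun i => (hM.stronglyAdapted i).mono (ℱ.le i)
  -- a.e. bound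
  have hb : ∀ᵐ ω ∂P, ∀ k, k ≤ n → |M k ω| ≤ c := by
    rw [ae_all_iff]
    intro k
    by_cases hk : k ≤ n
    · filter_upwards [hbdd k hk] with ω h _; exact h
    · filter_upwards with ω h; exact absurd h hk
  have hdb : ∀ i j, i ≤ n → j ≤ n → ∀ᵐ ω ∂P, |M i ω - M j ω| ≤ 2*c := by
    intro i j hi hj
    filter_upwards [hb] with ω h
    calc |M i ω - M j ω| ≤ |M i ω| + |M j ω| := abs_sub _ _
    _ ≤ 2*c := by have h1 := h i hi; have h2 := h j hj; linarith
  -- integrability helpers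
  have hint1 : ∀ i j i' j', i ≤ n → j ≤ n → i' ≤ n → j' ≤ n →
      Integrable (fun ω => (M i ω - M j ω) * (M i' ω - M j' ω)) P := by
    intro i j i' j' hi hj hi' hj'
    refine ⟨(((hSM i).sub (hSM j)).mul ((hSM i').sub (hSM j'))).aestronglyMeasurable,
      HasFiniteIntegral.of_bounded (C := (2*c)*(2*c)) ?_⟩
    filter_upwards [hdb i j hi hj, hdb i' j' hi' hj'] with ω h1 h2
    rw [Real.norm_eq_abs, abs_mul]
    exact mul_le_mul h1 h2 (abs_nonneg _) (le_trans (abs_nonneg _) h1)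
  have hint2 : ∀ i j, i ≤ n → j ≤ n →
      Integrable (fun ω => (M i ω - M j ω)^2) P := fun i j hi hj =>
    (hint1 i j i j hi hj hi hj).congr (ae_of_all _ fun ω => (pow_two _).symm)
  have hint3 : ∀ i j i' j' i'' j'', i ≤ n → j ≤ n → i' ≤ n → j' ≤ n → i'' ≤ n → j'' ≤ n →
      Integrable (fun ω => ((M i ω - M j ω)^2 * (M i' ω - M j' ω))
        * (M i'' ω - M j'' ω)) P := by
    intro i j i' j' i'' j'' hi hj hi' hj' hi'' hj''
    refine ⟨(((((hSM i).sub (hSM j)).pow 2).mul ((hSM i').sub (hSM j'))).mul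
      ((hSM i'').sub (hSM j''))).aestronglyMeasurable,
      HasFiniteIntegral.of_bounded (C := ((2*c)^2*(2*c))*(2*c)) ?_⟩
    filter_upwards [hdb i j hi hj, hdb i' j' hi' hj', hdb i'' j'' hi'' hj''] with ω h1 h2 h3
    rw [Real.norm_eq_abs, abs_mul, abs_mul, abs_pow]
    have hx : |M i ω - M j ω|^2 ≤ (2*c)^2 := by nlinarith [abs_nonneg (M i ω - M j ω)]
    have h4 : |M i ω - M j ω|^2 * |M i' ω - M j' ω| ≤ (2*c)^2*(2*c) :=
      mul_le_mul hx h2 (abs_nonneg _) (by positivity)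
    exact mul_le_mul h4 h3 (abs_nonneg _) (by positivity)
  have hint4 : ∀ i j i' j', i ≤ n → j ≤ n → i' ≤ n → j' ≤ n →
      Integrable (fun ω => (M i ω - M j ω)^2 * (M i' ω - M j' ω)^2) P := by
    intro i j i' j' hi hj hi' hj'
    exact (hint3 i j i' j' i' j' hi hj hi' hj' hi' hj').congr (ae_of_all _ fun ω => by ring)
  -- key per-index estimate
  have key : ∀ k, k < n →
      ∫ ω, (((M (k+1) ω - M k ω)^2)^2
          + 2 * (M (k+1) ω - M k ω)^2 * ∑ l ∈ Finset.Ico (k+1) n, (M (l+1) ω - M l ω)^2) ∂P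
        ≤ 12 * c^2 * ∫ ω, (M (k+1) ω - M k ω)^2 ∂P := by
    intro k hk
    have hk1 : k + 1 ≤ n := hk
    -- pointwise identity
    have hpt : ∀ ω,
        ((M (k+1) ω - M k ω)^2)^2
          + 2 * (M (k+1) ω - M k ω)^2 * ∑ l ∈ Finset.Ico (k+1) n, (M (l+1) ω - M l ω)^2
        = (((M (k+1) ω - M k ω)^2)^2
            + 2 * (M (k+1) ω - M k ω)^2 * (M n ω - M (k+1) ω)^2)
          - ∑ l ∈ Finset.Ico (k+1) n,
              4 * (((M (k+1) ω - M k ω)^2 * (M l ω - M (k+1) ω)) * (M (l+1) ω - M l ω)) := by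
      intro ω
      have ht := tele_aux (fun i => M i ω) (k+1) n hk1
      simp only [Finset.sum_add_distrib] at ht
      have hq : ∑ l ∈ Finset.Ico (k+1) n,
          2*(M l ω - M (k+1) ω)*(M (l+1) ω - M l ω)
          = 2 * ∑ l ∈ Finset.Ico (k+1) n, (M l ω - M (k+1) ω)*(M (l+1) ω - M l ω) := by
        rw [Finset.mul_sum]
        exact Finset.sum_congr rfl fun l _ => by ring
      have hq2 : ∑ l ∈ Finset.Ico (k+1) n,
          4 * (((M (k+1) ω - M k ω)^2 * (M l ω - M (k+1) ω)) * (M (l+1) ω - M l ω))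
          = (4 * (M (k+1) ω - M k ω)^2)
            * ∑ l ∈ Finset.Ico (k+1) n, (M l ω - M (k+1) ω)*(M (l+1) ω - M l ω) := by
        rw [Finset.mul_sum]
        exact Finset.sum_congr rfl fun l _ => by ring
      rw [hq] at ht
      rw [hq2]
      linear_combination (-2 * (M (k+1) ω - M k ω)^2) * ht
    -- integrals of the cross terms vanish
    have hcross : ∀ l ∈ Finset.Ico (k+1) n,
        ∫ ω, 4 * (((M (k+1) ω - M k ω)^2 * (M l ω - M (k+1) ω)) * (M (l+1) ω - M l ω)) ∂P
          = 0 := by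
      intro l hl
      obtain ⟨hl1, hl2⟩ := Finset.mem_Ico.mp hl
      have hX : StronglyMeasurable[ℱ l] (fun ω => (M (k+1) ω - M k ω)^2 * (M l ω - M (k+1) ω)) := by
        have m1 : StronglyMeasurable[ℱ l] (M k) := (hM.stronglyAdapted k).mono (ℱ.mono (le_trans (Nat.le_succ k) hl1))
        have m2 : StronglyMeasurable[ℱ l] (M (k+1)) := (hM.stronglyAdapted (k+1)).mono (ℱ.mono hl1)
        have m3 : StronglyMeasurable[ℱ l] (M l) := hM.stronglyAdapted l
        exact ((m2.sub m1).pow 2).mul (m3.sub m2)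
      have h0 := orth_aux P ℱ M hM l
        (fun ω => (M (k+1) ω - M k ω)^2 * (M l ω - M (k+1) ω)) hX
        (hint3 (k+1) k l (k+1) (l+1) l hk1 (le_trans (Nat.le_succ k) hk1)
          (le_of_lt hl2) hk1 hl2 (le_of_lt hl2))
      rw [integral_const_mul, h0, mul_zero]
    -- split the integral
    have hintA : Integrable (fun ω => ((M (k+1) ω - M k ω)^2)^2) P :=
      (hint4 (k+1) k (k+1) k hk1 (le_trans (Nat.le_succ k) hk1) hk1
        (le_trans (Nat.le_succ k) hk1)).congr (ae_of_all _ fun ω => by ring)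
    have hintB : Integrable (fun ω => 2 * (M (k+1) ω - M k ω)^2 * (M n ω - M (k+1) ω)^2) P :=
      ((hint4 (k+1) k n (k+1) hk1 (le_trans (Nat.le_succ k) hk1) le_rfl hk1).const_mul 2).congr
        (ae_of_all _ fun ω => by ring)
    have hintC : Integrable (fun ω => ∑ l ∈ Finset.Ico (k+1) n,
        4 * (((M (k+1) ω - M k ω)^2 * (M l ω - M (k+1) ω)) * (M (l+1) ω - M l ω))) P := by
      refine integrable_finset_sum _ fun l hl => ?_
      obtain ⟨hl1, hl2⟩ := Finset.mem_Ico.mp hl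
      exact (hint3 (k+1) k l (k+1) (l+1) l hk1 (le_trans (Nat.le_succ k) hk1)
        (le_of_lt hl2) hk1 hl2 (le_of_lt hl2)).const_mul 4
    have hsplit : ∫ ω, (((M (k+1) ω - M k ω)^2)^2
          + 2 * (M (k+1) ω - M k ω)^2 * ∑ l ∈ Finset.Ico (k+1) n, (M (l+1) ω - M l ω)^2) ∂P
        = (∫ ω, ((M (k+1) ω - M k ω)^2)^2 ∂P)
          + ∫ ω, 2 * (M (k+1) ω - M k ω)^2 * (M n ω - M (k+1) ω)^2 ∂P := by
      have hAB : Integrable (fun ω => ((M (k+1) ω - M k ω)^2)^2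
          + 2 * (M (k+1) ω - M k ω)^2 * (M n ω - M (k+1) ω)^2) P := hintA.add hintB
      rw [integral_congr_ae (ae_of_all _ hpt), integral_sub hAB hintC,
        integral_finset_sum _ (fun l hl => by
          obtain ⟨hl1, hl2⟩ := Finset.mem_Ico.mp hl
          exact (hint3 (k+1) k l (k+1) (l+1) l hk1 (le_trans (Nat.le_succ k) hk1)
            (le_of_lt hl2) hk1 hl2 (le_of_lt hl2)).const_mul 4),
        Finset.sum_congr rfl hcross, Finset.sum_const, smul_zero, sub_zero,
        integral_add hintA hintB]
    -- bound the two integrals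
    have hintD : Integrable (fun ω => (M (k+1) ω - M k ω)^2) P :=
      hint2 (k+1) k hk1 (le_trans (Nat.le_succ k) hk1)
    have hbd1 : ∫ ω, ((M (k+1) ω - M k ω)^2)^2 ∂P
        ≤ 4 * c^2 * ∫ ω, (M (k+1) ω - M k ω)^2 ∂P := by
      rw [← integral_const_mul]
      refine integral_mono_ae hintA (hintD.const_mul _) ?_
      filter_upwards [hdb (k+1) k hk1 (le_trans (Nat.le_succ k) hk1)] with ω h1
      have h2 : (M (k+1) ω - M k ω)^2 ≤ 4*c^2 := by
        nlinarith [abs_nonneg (M (k+1) ω - M k ω), sq_abs (M (k+1) ω - M k ω), hc]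
      nlinarith [sq_nonneg (M (k+1) ω - M k ω)]
    have hbd2 : ∫ ω, 2 * (M (k+1) ω - M k ω)^2 * (M n ω - M (k+1) ω)^2 ∂P
        ≤ 8 * c^2 * ∫ ω, (M (k+1) ω - M k ω)^2 ∂P := by
      rw [← integral_const_mul]
      refine integral_mono_ae hintB (hintD.const_mul _) ?_
      filter_upwards [hdb n (k+1) le_rfl hk1] with ω h1
      have h2 : (M n ω - M (k+1) ω)^2 ≤ 4*c^2 := by
        nlinarith [abs_nonneg (M n ω - M (k+1) ω), sq_abs (M n ω - M (k+1) ω), hc]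
      nlinarith [sq_nonneg (M (k+1) ω - M k ω)]
    rw [hsplit]; linarith
  -- integrability of the summand functions in the square expansion
  have hintF : ∀ k, k < n → Integrable (fun ω => ((M (k+1) ω - M k ω)^2)^2
      + 2 * (M (k+1) ω - M k ω)^2 * ∑ l ∈ Finset.Ico (k+1) n, (M (l+1) ω - M l ω)^2) P := by
    intro k hk
    have hk1 : k + 1 ≤ n := hk
    have hA : Integrable (fun ω => ((M (k+1) ω - M k ω)^2)^2) P :=
      (hint4 (k+1) k (k+1) k hk1 (le_trans (Nat.le_succ k) hk1) hk1
        (le_trans (Nat.le_succ k) hk1)).congr (ae_of_all _ fun ω => by ring)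
    have hB : Integrable (fun ω => 2 * (M (k+1) ω - M k ω)^2
        * ∑ l ∈ Finset.Ico (k+1) n, (M (l+1) ω - M l ω)^2) P := by
      refine (integrable_finset_sum (Finset.Ico (k+1) n) (f := fun l ω =>
        2 * ((M (k+1) ω - M k ω)^2 * (M (l+1) ω - M l ω)^2)) fun l hl => ?_).congr
        (ae_of_all _ fun ω => ?_)
      · obtain ⟨hl1, hl2⟩ := Finset.mem_Ico.mp hl
        exact (hint4 (k+1) k (l+1) l hk1 (le_trans (Nat.le_succ k) hk1) hl2
          (le_of_lt hl2)).const_mul 2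
      · simp only [Finset.mul_sum]
        exact Finset.sum_congr rfl fun l _ => by ring
    exact hA.add hB
  -- ∫ sum of squares = ∫ (M n - M 0)^2
  have hS : ∫ ω, (∑ k ∈ Finset.range n, (M (k+1) ω - M k ω)^2) ∂P
      = ∫ ω, (M n ω - M 0 ω)^2 ∂P := by
    have hpt : ∀ ω : Ω, (M n ω - M 0 ω)^2 = ∑ l ∈ Finset.range n,
        ((M (l+1) ω - M l ω)^2 + 2*(M l ω - M 0 ω)*(M (l+1) ω - M l ω)) := by
      intro ω
      rw [Finset.range_eq_Ico]
      exact tele_aux (fun i => M i ω) 0 n (Nat.zero_le n)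
    have hterm : ∀ l ∈ Finset.range n,
        Integrable (fun ω => (M (l+1) ω - M l ω)^2
          + 2*(M l ω - M 0 ω)*(M (l+1) ω - M l ω)) P := by
      intro l hl
      have hl2 : l < n := Finset.mem_range.mp hl
      refine (hint2 (l+1) l hl2 (le_of_lt hl2)).add ?_
      exact ((hint1 l 0 (l+1) l (le_of_lt hl2) (Nat.zero_le n) hl2 (le_of_lt hl2)).const_mul 2).congr
        (ae_of_all _ fun ω => by ring)
    have hcross : ∀ l ∈ Finset.range n,
        ∫ ω, 2*(M l ω - M 0 ω)*(M (l+1) ω - M l ω) ∂P = 0 := by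
      intro l hl
      have hl2 : l < n := Finset.mem_range.mp hl
      have hX : StronglyMeasurable[ℱ l] (fun ω => 2*(M l ω - M 0 ω)) := by
        have m1 : StronglyMeasurable[ℱ l] (M 0) := (hM.stronglyAdapted 0).mono (ℱ.mono (Nat.zero_le l))
        exact (stronglyMeasurable_const.mul ((hM.stronglyAdapted l).sub m1))
      exact orth_aux P ℱ M hM l (fun ω => 2*(M l ω - M 0 ω)) hX
        (((hint1 l 0 (l+1) l (le_of_lt hl2) (Nat.zero_le n) hl2 (le_of_lt hl2)).const_mul 2).congr
          (ae_of_all _ fun ω => by ring))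
    rw [show (∫ ω, (M n ω - M 0 ω)^2 ∂P) = ∫ ω, (∑ l ∈ Finset.range n,
        ((M (l+1) ω - M l ω)^2 + 2*(M l ω - M 0 ω)*(M (l+1) ω - M l ω))) ∂P from
      integral_congr_ae (ae_of_all _ hpt), integral_finset_sum _ hterm]
    rw [integral_finset_sum _ (fun l hl => hint2 (l+1) l (Finset.mem_range.mp hl)
      (le_of_lt (Finset.mem_range.mp hl)))]
    refine (Finset.sum_congr rfl fun l hl => ?_).symm
    rw [integral_add (hint2 (l+1) l (Finset.mem_range.mp hl)
      (le_of_lt (Finset.mem_range.mp hl)))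
      (((hint1 l 0 (l+1) l (le_of_lt (Finset.mem_range.mp hl)) (Nat.zero_le n)
        (Finset.mem_range.mp hl) (le_of_lt (Finset.mem_range.mp hl))).const_mul 2).congr
        (ae_of_all _ fun ω => by ring)),
      hcross l hl, add_zero]
  -- main chain
  have hmain : ∫ ω, (∑ k ∈ Finset.range n, (M (k+1) ω - M k ω)^2)^2 ∂P
      ≤ 12 * c^2 * ∫ ω, (M n ω - M 0 ω)^2 ∂P := by
    have e1 : ∫ ω, (∑ k ∈ Finset.range n, (M (k+1) ω - M k ω)^2)^2 ∂P
        = ∑ k ∈ Finset.range n, ∫ ω, (((M (k+1) ω - M k ω)^2)^2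
            + 2 * (M (k+1) ω - M k ω)^2 * ∑ l ∈ Finset.Ico (k+1) n, (M (l+1) ω - M l ω)^2) ∂P := by
      rw [integral_congr_ae (ae_of_all _ fun ω =>
        sq_sum_aux (fun k => (M (k+1) ω - M k ω)^2) n)]
      exact integral_finset_sum _ fun k hk => hintF k (Finset.mem_range.mp hk)
    have e2 : ∑ k ∈ Finset.range n, ∫ ω, (((M (k+1) ω - M k ω)^2)^2
          + 2 * (M (k+1) ω - M k ω)^2 * ∑ l ∈ Finset.Ico (k+1) n, (M (l+1) ω - M l ω)^2) ∂P
        ≤ ∑ k ∈ Finset.range n, 12 * c^2 * ∫ ω, (M (k+1) ω - M k ω)^2 ∂P :=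
      Finset.sum_le_sum fun k hk => key k (Finset.mem_range.mp hk)
    have e3 : ∑ k ∈ Finset.range n, 12 * c^2 * ∫ ω, (M (k+1) ω - M k ω)^2 ∂P
        = 12 * c^2 * ∫ ω, (∑ k ∈ Finset.range n, (M (k+1) ω - M k ω)^2) ∂P := by
      rw [integral_finset_sum _ (fun k hk => hint2 (k+1) k (Finset.mem_range.mp hk)
        (le_of_lt (Finset.mem_range.mp hk))), Finset.mul_sum]
    rw [e1, ← hS]
    calc _ ≤ _ := e2
    _ = _ := e3
  refine ⟨hmain, ?_⟩
  have h2 : ∫ ω, (M n ω - M 0 ω)^2 ∂P ≤ 4*c^2 := by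
    have : ∫ ω, (M n ω - M 0 ω)^2 ∂P ≤ ∫ _ω, 4*c^2 ∂P := by
      refine integral_mono_ae (hint2 n 0 le_rfl (Nat.zero_le n)) (integrable_const _) ?_
      filter_upwards [hdb n 0 le_rfl (Nat.zero_le n)] with ω h1
      nlinarith [abs_nonneg (M n ω - M 0 ω), sq_abs (M n ω - M 0 ω), hc]
    simpa using this
  have h3 : (0:ℝ) ≤ ∫ ω, (M n ω - M 0 ω)^2 ∂P :=
    integral_nonneg fun ω => sq_nonneg _
  nlinarith [sq_nonneg c, h2, h3]
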